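/- Let C be a constraint on variables y₁,…,y_k. For any i, j ∈ [1..k], the projection functions π_i and π_j of C commute: π_i(π_j(X₁,…,X_k)) = π_j(π_i(X₁,…,X_k)) for all (X₁,…,X_k). -/
import Mathlib


/-- The projection function `π_i` associated with a constraint `C`: it replaces
the `i`-th component `Xᵢ` of its argument by `Π_i(C ∩ (X₁ × ⋯ × X_k))` and
leaves the other components unchanged. -/
def proj {k : ℕ} {E : Fin k → Type*} (C : Set (∀ j, E j)) (i : Fin k)
    (X : ∀ j, Set (E j)) : ∀ j, Set (E j) :=
  Function.update X i {a : E i | ∃ d ∈ C, (∀ j, d j ∈ X j) ∧ d i = a}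

private lemma mem_proj_iff {k : ℕ} {E : Fin k → Type*} (C : Set (∀ j, E j))
    (j : Fin k) (X : ∀ l, Set (E l)) {d : ∀ l, E l} (hd : d ∈ C) :
    (∀ l, d l ∈ proj C j X l) ↔ ∀ l, d l ∈ X l := by
  constructor
  · intro h l
    rcases eq_or_ne l j with rfl | hlj
    · have hj := h l
      simp only [proj, Function.update_self] at hj
      obtain ⟨d', _, hd'X, hval⟩ := hj
      rw [← hval]; exact hd'X l
    · have := h l
      rwa [proj, Function.update_of_ne hlj] at this
  · intro h l
    rcases eq_or_ne l j with rfl | hlj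
    · simp only [proj, Function.update_self]
      exact ⟨d, hd, h, rfl⟩
    · rw [proj, Function.update_of_ne hlj]; exact h l

private lemma proj_proj {k : ℕ} {E : Fin k → Type*} (C : Set (∀ j, E j))
    (i j : Fin k) (X : ∀ l, Set (E l)) :
    proj C i (proj C j X) =
      Function.update (proj C j X) i
        {a : E i | ∃ d ∈ C, (∀ l, d l ∈ X l) ∧ d i = a} := by
  have hset : {a : E i | ∃ d ∈ C, (∀ l, d l ∈ proj C j X l) ∧ d i = a} =
      {a : E i | ∃ d ∈ C, (∀ l, d l ∈ X l) ∧ d i = a} := by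
    ext a
    constructor
    · rintro ⟨d, hd, hdX, rfl⟩
      exact ⟨d, hd, (mem_proj_iff C j X hd).1 hdX, rfl⟩
    · rintro ⟨d, hd, hdX, rfl⟩
      exact ⟨d, hd, (mem_proj_iff C j X hd).2 hdX, rfl⟩
  rw [proj, hset]

/-- Commutativity Lemma (i): for any `i, j ∈ [1..k]` the projection functions
`π_i` and `π_j` of a constraint `C` commute. -/
theorem proj_commute {k : ℕ} {E : Fin k → Type*} (C : Set (∀ j, E j))
    (i j : Fin k) :
    ∀ X : ∀ l, Set (E l), proj C i (proj C j X) = proj C j (proj C i X) := by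
  intro X
  rcases eq_or_ne i j with rfl | hij
  · rfl
  · rw [proj_proj C i j X, proj_proj C j i X, proj, proj,
      Function.update_comm hij]
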